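/- Let d ≥ 2 be an integer, let E ⊆ ℝ be an open interval, let V, A : E → ℝ be differentiable with V(s) > 0 and A(s) > 0 for all s ∈ E, and let r : E → ℝ be differentiable with r'(s) = V'(s)/A(s) for all s ∈ E. Then the following are equivalent: (i) there exists a constant C ∈ ℝ such that r(s) = d·V(s)/A(s) + C for all s ∈ E; (ii) there exists a constant k > 0 such that A(s)^d = k·V(s)^(d−1) for all s ∈ E. -/

import Mathlib

private lemma const_of_deriv_zero (E : Set ℝ) (hE : IsOpen E) (hE' : E.OrdConnected)
    (f : ℝ → ℝ) (hf : ∀ s ∈ E, HasDerivAt f 0 s)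
    {x y : ℝ} (hx : x ∈ E) (hy : y ∈ E) : f x = f y := by
  have hconv : Convex ℝ E := hE'.convex
  refine hconv.is_const_of_fderivWithin_eq_zero (𝕜 := ℝ) (fun s hs => ?_) (fun s hs => ?_) hx hy
  · exact ((hf s hs).differentiableAt).differentiableWithinAt
  · rw [fderivWithin_of_isOpen hE hs]
    have h0 : (ContinuousLinearMap.smulRight (1 : ℝ →L[ℝ] ℝ) (0 : ℝ)) = 0 := by
      ext; simp
    have h1 : HasFDerivAt f (0 : ℝ →L[ℝ] ℝ) s := h0 ▸ (hf s hs).hasFDerivAt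
    exact h1.fderiv

/-- Characterization of homogeneous families: the change of variable `r`
(an antiderivative of `V'/A`) equals `d·V/A` up to an additive constant on `E`
if and only if the isoperimetric ratio is constant, i.e. `A^d = k·V^(d−1)` on `E`
for some constant `k > 0`. -/
theorem homogeneous_iff_isoperimetric_ratio_constant (d : ℕ) (hd : 2 ≤ d)
    (E : Set ℝ) (hE : IsOpen E) (hE' : E.OrdConnected)
    (V V' A A' r : ℝ → ℝ)
    (hV : ∀ s ∈ E, HasDerivAt V (V' s) s)
    (hA : ∀ s ∈ E, HasDerivAt A (A' s) s)
    (hVpos : ∀ s ∈ E, 0 < V s) (hApos : ∀ s ∈ E, 0 < A s)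
    (hr : ∀ s ∈ E, HasDerivAt r (V' s / A s) s) :
    (∃ C : ℝ, ∀ s ∈ E, r s = d * V s / A s + C) ↔
      (∃ k : ℝ, 0 < k ∧ ∀ s ∈ E, A s ^ d = k * V s ^ (d - 1)) := by
  obtain ⟨m, rfl⟩ : ∃ m, d = m + 2 := ⟨d - 2, by omega⟩
  have hd1 : (m + 2 : ℕ) - 1 = m + 1 := rfl
  rcases E.eq_empty_or_nonempty with rfl | ⟨s0, hs0⟩
  · constructor
    · intro _; exact ⟨1, one_pos, fun s hs => absurd hs (by simp)⟩
    · intro _; exact ⟨0, fun s hs => absurd hs (by simp)⟩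
  constructor
  · -- (i) → (ii)
    rintro ⟨C, hC⟩
    -- key relation: (m+2) * V * A' = (m+1) * V' * A on E
    have rel : ∀ s ∈ E, (m + 2 : ℝ) * V s * A' s = (m + 1 : ℝ) * V' s * A s := by
      intro s hs
      have hAne : A s ≠ 0 := (hApos s hs).ne'
      have h1 : HasDerivAt (fun t => (m + 2 : ℝ) * V t / A t + C)
          ((((m + 2 : ℝ) * V' s) * A s - ((m + 2 : ℝ) * V s) * A' s) / A s ^ 2) s :=
        (((hV s hs).const_mul _).div (hA s hs) hAne).add_const C
      have heq : r =ᶠ[nhds s] (fun t => (m + 2 : ℝ) * V t / A t + C) := by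
        filter_upwards [hE.mem_nhds hs] with t ht
        have := hC t ht; push_cast at this ⊢; linarith
      have h2 : HasDerivAt r
          ((((m + 2 : ℝ) * V' s) * A s - ((m + 2 : ℝ) * V s) * A' s) / A s ^ 2) s :=
        h1.congr_of_eventuallyEq heq
      have h3 := (hr s hs).unique h2
      field_simp at h3
      refine mul_right_cancel₀ hAne ?_
      linear_combination A s * h3
    -- constancy of G = A^(m+2)/V^(m+1)
    set G : ℝ → ℝ := fun t => A t ^ (m + 2) / V t ^ (m + 1) with hG
    have hGconst : ∀ s ∈ E, G s = G s0 := by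
      intro s hs
      refine const_of_deriv_zero E hE hE' G (fun t ht => ?_) hs hs0
      have hVne : V t ≠ 0 := (hVpos t ht).ne'
      have hVpne : V t ^ (m + 1) ≠ 0 := pow_ne_zero _ hVne
      have h1 : HasDerivAt G
          ((((m + 2 : ℕ) : ℝ) * A t ^ (m + 2 - 1) * A' t * V t ^ (m + 1)
            - A t ^ (m + 2) * (((m + 1 : ℕ) : ℝ) * V t ^ (m + 1 - 1) * V' t))
            / (V t ^ (m + 1)) ^ 2) t :=
        ((hA t ht).pow _).div ((hV t ht).pow _) hVpne
      have hz : (((m + 2 : ℕ) : ℝ) * A t ^ (m + 2 - 1) * A' t * V t ^ (m + 1)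
            - A t ^ (m + 2) * (((m + 1 : ℕ) : ℝ) * V t ^ (m + 1 - 1) * V' t))
            / (V t ^ (m + 1)) ^ 2 = 0 := by
        rw [div_eq_zero_iff]; left
        have hr := rel t ht
        push_cast
        try simp only [show m + 2 - 1 = m + 1 from rfl, show m + 1 - 1 = m from rfl]
        linear_combination (A t ^ (m + 1) * V t ^ m) * hr
      rw [hz] at h1; exact h1
    refine ⟨G s0, ?_, fun s hs => ?_⟩
    · exact div_pos (pow_pos (hApos s0 hs0) _) (pow_pos (hVpos s0 hs0) _)
    · have := hGconst s hs
      have hVpne : V s ^ (m + 1) ≠ 0 := pow_ne_zero _ (hVpos s hs).ne'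
      rw [hd1]
      have this : A s ^ (m + 2) / V s ^ (m + 1) = G s0 := this
      rw [div_eq_iff hVpne] at this
      linarith [this]
  · -- (ii) → (i)
    rintro ⟨k, hk, hkeq⟩
    have rel : ∀ s ∈ E, (m + 2 : ℝ) * V s * A' s = (m + 1 : ℝ) * V' s * A s := by
      intro s hs
      have h1 : HasDerivAt (fun t => A t ^ (m + 2))
          (((m + 2 : ℕ) : ℝ) * A s ^ (m + 2 - 1) * A' s) s := (hA s hs).pow _
      have h2 : HasDerivAt (fun t => k * V t ^ (m + 1))
          (k * (((m + 1 : ℕ) : ℝ) * V s ^ (m + 1 - 1) * V' s)) s :=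
        ((hV s hs).pow _).const_mul k
      have heq : (fun t => A t ^ (m + 2)) =ᶠ[nhds s] (fun t => k * V t ^ (m + 1)) := by
        filter_upwards [hE.mem_nhds hs] with t ht
        have := hkeq t ht; rwa [hd1] at this
      have h3 := ((h2.congr_of_eventuallyEq heq).unique h1)
      have h4 : A s ^ (m + 2) = k * V s ^ (m + 1) := by
        have := hkeq s hs; rwa [hd1] at this
      have hz : ((m + 2 : ℝ) * V s * A' s - (m + 1 : ℝ) * V' s * A s)
          * (A s ^ (m + 1) * V s ^ m) = 0 := by
        push_cast at h3
        try simp only [show m + 2 - 1 = m + 1 from rfl, show m + 1 - 1 = m from rfl] at h3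
        linear_combination (-(V s ^ (m + 1))) * h3 - ((m + 1 : ℝ) * V s ^ m * V' s) * h4
      rcases mul_eq_zero.mp hz with h | h
      · linarith [sub_eq_zero.mp h]
      · exact absurd h (mul_ne_zero (pow_ne_zero _ (hApos s hs).ne')
          (pow_ne_zero _ (hVpos s hs).ne'))
    set F : ℝ → ℝ := fun t => r t - (m + 2 : ℝ) * V t / A t with hF
    have hFconst : ∀ s ∈ E, F s = F s0 := by
      intro s hs
      refine const_of_deriv_zero E hE hE' F (fun t ht => ?_) hs hs0
      have hAne : A t ≠ 0 := (hApos t ht).ne'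
      have h1 : HasDerivAt F
          (V' t / A t - (((m + 2 : ℝ) * V' t) * A t - ((m + 2 : ℝ) * V t) * A' t) / A t ^ 2) t :=
        (hr t ht).sub (((hV t ht).const_mul _).div (hA t ht) hAne)
      have hz : V' t / A t
          - (((m + 2 : ℝ) * V' t) * A t - ((m + 2 : ℝ) * V t) * A' t) / A t ^ 2 = 0 := by
        have hr' := rel t ht
        field_simp
        linear_combination hr'
      rw [hz] at h1; exact h1
    refine ⟨F s0, fun s hs => ?_⟩
    have := hFconst s hs
    simp only [hF] at this
    push_cast
    linarith
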